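/- Let B ∈ (0,1), let q ≥ 3 be an integer, and let ε ∈ (0,1). Let G = (V,E) be a finite graph, μ_G the q-state Potts distribution on G with parameter B, and u, v vertices with {u,v} ∉ E such that E[Corr_G(U_σ, u, v)] ≤ ε, where the expectation is over σ ∼ μ_G and over the random bichromatic class U_σ containing u and v. Let G' = (V, E ∪ {{u,v}}). Sample σ' : V → [q] as follows: sample σ ∼ μ_G; if σ_u ≠ σ_v set σ' = σ; otherwise, with probability qB/(B+q−1) set σ' = σ, and with the remaining probability pick a uniformly random colour c' from [q]∖{c} where c = σ_u = σ_v, set U = σ^{−1}(c,c'), sample τ : U → {c,c'} from the Ising distribution with parameter B on G[U] with state set {c,c'} conditioned on τ_u = c and τ_v = c', and set σ'_w = τ_w for w ∈ U and σ'_w = σ_w for w ∉ U. Then the distribution ν_{σ'} of σ' satisfies ‖ν_{σ'} − μ_{G'}‖_TV ≤ 2ε/B, where μ_{G'} is the q-state Potts distribution on G' with parameter B. -/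

import Mathlib

open scoped Classical

/-- Number of monochromatic edges of the configuration `σ` in the graph `G`. -/
noncomputable def mEdges {W : Type} [Fintype W] (G : SimpleGraph W) {q : ℕ}
    (σ : W → Fin q) : ℕ :=
  (Finset.univ.filter fun e : Sym2 W => e ∈ G.edgeSet ∧ ∀ x ∈ e, ∀ y ∈ e, σ x = σ y).card

/-- Potts partition function of `G` with `q` states and parameter `B`. -/
noncomputable def pottsZ {W : Type} [Fintype W] (G : SimpleGraph W) (q : ℕ) (B : ℝ) : ℝ :=
  ∑ σ : W → Fin q, B ^ mEdges G σ

/-- Potts probability of the configuration `σ`. -/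
noncomputable def pottsP {W : Type} [Fintype W] (G : SimpleGraph W) (q : ℕ) (B : ℝ)
    (σ : W → Fin q) : ℝ :=
  B ^ mEdges G σ / pottsZ G q B

/-- The `(c,c')`-colour-class of `σ`: vertices coloured `c` or `c'`. -/
def classOf {V : Type} {q : ℕ} (σ : V → Fin q) (c c' : Fin q) : Set V :=
  {x | σ x = c ∨ σ x = c'}

/-- The correlation `Corr_G(U,u,v)` between `u` and `v` in the Ising distribution with
parameter `B` on the induced subgraph `G[U]`:
`|π(η_u = 1, η_v = 1) / π(η_u = 1, η_v = 2) - 1|`. -/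
noncomputable def isingCorr {V : Type} [Fintype V] (G : SimpleGraph V) (B : ℝ)
    (U : Set V) (u v : V) : ℝ :=
  |(∑ f : ↥U → Fin 2,
        if (∀ x : ↥U, (x : V) = u → f x = 0) ∧ (∀ x : ↥U, (x : V) = v → f x = 0)
        then B ^ mEdges (G.induce U) f else 0) /
      (∑ f : ↥U → Fin 2,
        if (∀ x : ↥U, (x : V) = u → f x = 0) ∧ (∀ x : ↥U, (x : V) = v → f x = 1)
        then B ^ mEdges (G.induce U) f else 0) - 1|

/-- The expectation `E[Corr_G(U_σ,u,v)]` over `σ ∼ μ_G` and over the uniformly random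
bichromatic class `U_σ` containing `u` and `v`. -/
noncomputable def expCorr {V : Type} [Fintype V] (G : SimpleGraph V) (q : ℕ) (B : ℝ)
    (u v : V) : ℝ :=
  ∑ σ : V → Fin q, pottsP G q B σ *
    (if σ u = σ v then
        ((q : ℝ) - 1)⁻¹ *
          ∑ c' ∈ Finset.univ.erase (σ u), isingCorr G B (classOf σ (σ u) c') u v
      else isingCorr G B (classOf σ (σ u) (σ v)) u v)

/-- The Ising distribution with parameter `B` and state set `{c,c'}` on `G[U]`,
conditioned on `u` taking state `c` and `v` taking state `c'`, evaluated at `ξ`. -/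
noncomputable def isingCondP {V : Type} [Fintype V] (G : SimpleGraph V) (B : ℝ) {q : ℕ}
    (U : Set V) (u v : V) (c c' : Fin q) (ξ : ↥U → Fin q) : ℝ :=
  B ^ mEdges (G.induce U) ξ /
    ∑ ξ' ∈ Finset.univ.filter (fun ξ' : ↥U → Fin q =>
        (∀ x, ξ' x = c ∨ ξ' x = c') ∧ (∀ x : ↥U, (x : V) = u → ξ' x = c) ∧
          (∀ x : ↥U, (x : V) = v → ξ' x = c')),
      B ^ mEdges (G.induce U) ξ'

/-- The transition kernel of the (ideal) resampling step when the edge `{u,v}` is added: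
if `σ_u ≠ σ_v` keep `σ`; otherwise keep `σ` with probability `qB/(B+q-1)` and with the
remaining probability pick a uniformly random second colour `c' ≠ c = σ_u = σ_v` and
resample the `(c,c')`-colour-class from the Ising distribution on it conditioned on
`u ↦ c`, `v ↦ c'`.  `resampleKernel G q B u v σ η` is the probability that the resulting
configuration is `η`. -/
noncomputable def resampleKernel {V : Type} [Fintype V] (G : SimpleGraph V) (q : ℕ) (B : ℝ)
    (u v : V) (σ η : V → Fin q) : ℝ :=
  if σ u ≠ σ v then (if η = σ then 1 else 0)
  else
    ((q : ℝ) * B / (B + (q : ℝ) - 1)) * (if η = σ then 1 else 0) +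
      ∑ c' ∈ Finset.univ.erase (σ u),
        ((1 - B) / (B + (q : ℝ) - 1)) *
          (if (∀ x, x ∉ classOf σ (σ u) c' → η x = σ x) ∧
              (∀ x ∈ classOf σ (σ u) c', η x = σ u ∨ η x = c') ∧
              η u = σ u ∧ η v = c'
            then isingCondP G B (classOf σ (σ u) c') u v (σ u) c'
                (fun x => η (x : V))
            else 0)

/-- The distribution `ν_{σ'}` of the output of the resampling step, started from `σ ∼ μ_G`. -/
noncomputable def resampleDist {V : Type} [Fintype V] (G : SimpleGraph V) (q : ℕ) (B : ℝ)
    (u v : V) (η : V → Fin q) : ℝ :=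
  ∑ σ : V → Fin q, pottsP G q B σ * resampleKernel G q B u v σ η

set_option linter.unusedSectionVars false
set_option linter.unusedVariables false

variable {V : Type} [Fintype V]

/-- extend `ξ` on `U` by `σ` off `U`. -/
noncomputable def extFun {q : ℕ} (σ : V → Fin q) (U : Set V) (ξ : ↥U → Fin q) : V → Fin q :=
  fun x => if h : x ∈ U then ξ ⟨x, h⟩ else σ x

lemma extFun_mem {q : ℕ} (σ : V → Fin q) (U : Set V) (ξ : ↥U → Fin q) {x : V} (h : x ∈ U) :
    extFun σ U ξ x = ξ ⟨x, h⟩ := dif_pos h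

lemma extFun_not_mem {q : ℕ} (σ : V → Fin q) (U : Set V) (ξ : ↥U → Fin q) {x : V} (h : x ∉ U) :
    extFun σ U ξ x = σ x := dif_neg h

lemma extFun_coe {q : ℕ} (σ : V → Fin q) (U : Set V) (ξ : ↥U → Fin q) (x : ↥U) :
    extFun σ U ξ x = ξ x := by
  rw [extFun_mem σ U ξ x.2]

lemma sum_ext {q : ℕ} (σ : V → Fin q) (U : Set V) (F : (V → Fin q) → ℝ) :
    (∑ η : V → Fin q, if ∀ x, x ∉ U → η x = σ x then F η else 0)
      = ∑ ξ : ↥U → Fin q, F (extFun σ U ξ) := by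
  classical
  rw [← (Equiv.piEquivPiSubtypeProd (fun x => x ∈ U) (fun _ => Fin q)).symm.sum_comp
      (fun η => if ∀ x, x ∉ U → η x = σ x then F η else 0)]
  rw [Fintype.sum_prod_type]
  refine Finset.sum_congr rfl fun ξ _ => ?_
  rw [Finset.sum_eq_single (fun x : {x // ¬ x ∈ U} => σ x)]
  · have hc : ∀ x ∉ U,
        (Equiv.piEquivPiSubtypeProd (fun x => x ∈ U) fun _ => Fin q).symm
          (ξ, fun x : {x // ¬ x ∈ U} => σ x) x = σ x := by
      intro x hx
      rw [Equiv.piEquivPiSubtypeProd_symm_apply, dif_neg hx]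
    rw [if_pos hc]
    congr 1
  · intro g _ hg
    rw [if_neg]
    intro hc
    apply hg
    funext x
    have := hc x.1 x.2
    rwa [Equiv.piEquivPiSubtypeProd_symm_apply, dif_neg x.2] at this
  · intro h
    exact absurd (Finset.mem_univ _) h

noncomputable def mOut {q : ℕ} (G : SimpleGraph V) (U : Set V) (η : V → Fin q) : ℕ :=
  (Finset.univ.filter fun e : Sym2 V => e ∈ G.edgeSet ∧ (∀ x ∈ e, x ∉ U) ∧
      ∀ x ∈ e, ∀ y ∈ e, η x = η y).card

lemma mOut_congr {q : ℕ} (G : SimpleGraph V) (U : Set V) (σ η : V → Fin q)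
    (hagree : ∀ x, x ∉ U → σ x = η x) : mOut G U σ = mOut G U η := by
  unfold mOut
  congr 1
  apply Finset.filter_congr
  intro e _
  constructor
  · rintro ⟨h1, h2, h3⟩
    exact ⟨h1, h2, fun x hx y hy => by
      rw [← hagree x (h2 x hx), ← hagree y (h2 y hy)]; exact h3 x hx y hy⟩
  · rintro ⟨h1, h2, h3⟩
    exact ⟨h1, h2, fun x hx y hy => by
      rw [hagree x (h2 x hx), hagree y (h2 y hy)]; exact h3 x hx y hy⟩

lemma mEdges_split {q : ℕ} (G : SimpleGraph V) (U : Set V) (η : V → Fin q)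
    (hb : ∀ x, x ∈ U → ∀ y, y ∉ U → η x ≠ η y) :
    mEdges G η = mEdges (G.induce U) (fun x : ↥U => η x) + mOut G U η := by
  classical
  unfold mEdges mOut
  rw [← Finset.card_filter_add_card_filter_not
    (s := Finset.univ.filter fun e : Sym2 V => e ∈ G.edgeSet ∧ ∀ x ∈ e, ∀ y ∈ e, η x = η y)
    (p := fun e : Sym2 V => ∀ x ∈ e, x ∈ U)]
  congr 1
  · rw [Finset.filter_filter]
    refine (Finset.card_bij (fun e _ => Sym2.map Subtype.val e) ?_ ?_ ?_).symm
    · intro e he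
      induction e using Sym2.ind with
      | _ a b =>
        simp only [Finset.mem_filter, Finset.mem_univ, true_and, SimpleGraph.mem_edgeSet,
          SimpleGraph.comap_adj, Function.Embedding.coe_subtype, Sym2.mem_iff] at he
        obtain ⟨hadj, hmono⟩ := he
        show Sym2.map Subtype.val s(a, b) ∈ _
        rw [Sym2.map_pair_eq]
        simp only [Finset.mem_filter, Finset.mem_univ, true_and, SimpleGraph.mem_edgeSet,
          Sym2.mem_iff]
        refine ⟨⟨hadj, ?_⟩, ?_⟩
        · rintro x (rfl | rfl) y (rfl | rfl)
          · rfl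
          · exact hmono a (Or.inl rfl) b (Or.inr rfl)
          · exact hmono b (Or.inr rfl) a (Or.inl rfl)
          · rfl
        · rintro x (rfl | rfl)
          · exact a.2
          · exact b.2
    · intro e1 h1 e2 h2 h
      exact Sym2.map.injective Subtype.val_injective h
    · intro e he
      induction e using Sym2.ind with
      | _ x y =>
        simp only [Finset.mem_filter, Finset.mem_univ, true_and, SimpleGraph.mem_edgeSet,
          Sym2.mem_iff] at he
        obtain ⟨⟨hadj, hmono⟩, hin⟩ := he
        have hx : x ∈ U := hin x (Or.inl rfl)
        have hy : y ∈ U := hin y (Or.inr rfl)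
        refine ⟨s(⟨x, hx⟩, ⟨y, hy⟩), ?_, by simp [Sym2.map_pair_eq]⟩
        simp only [Finset.mem_filter, Finset.mem_univ, true_and, SimpleGraph.mem_edgeSet,
          SimpleGraph.comap_adj, Function.Embedding.coe_subtype, Sym2.mem_iff]
        refine ⟨hadj, ?_⟩
        rintro a (rfl | rfl) b (rfl | rfl)
        · rfl
        · exact hmono x (Or.inl rfl) y (Or.inr rfl)
        · exact hmono y (Or.inr rfl) x (Or.inl rfl)
        · rfl
  · rw [Finset.filter_filter]
    congr 1
    apply Finset.filter_congr
    intro e _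
    constructor
    · rintro ⟨⟨h1, h2⟩, h3⟩
      refine ⟨h1, ?_, h2⟩
      intro x hx
      push_neg at h3
      obtain ⟨z, hz, hzU⟩ := h3
      intro hxU
      exact hb x hxU z hzU (h2 x hx z hz)
    · rintro ⟨h1, h2, h3⟩
      refine ⟨⟨h1, h3⟩, ?_⟩
      intro hall
      induction e using Sym2.ind with
      | _ a b => exact h2 a (Sym2.mem_mk_left a b) (hall a (Sym2.mem_mk_left a b))

noncomputable def condZq (G : SimpleGraph V) (B : ℝ) {q : ℕ} (U : Set V) (u v : V)
    (c c' a b : Fin q) : ℝ :=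
  ∑ ξ : ↥U → Fin q, if (∀ x, ξ x = c ∨ ξ x = c') ∧ (∀ x : ↥U, (x : V) = u → ξ x = a) ∧
      (∀ x : ↥U, (x : V) = v → ξ x = b) then B ^ mEdges (G.induce U) ξ else 0

noncomputable def condZ2 (G : SimpleGraph V) (B : ℝ) (U : Set V) (u v : V) (a b : Fin 2) : ℝ :=
  ∑ f : ↥U → Fin 2, if (∀ x : ↥U, (x : V) = u → f x = a) ∧ (∀ x : ↥U, (x : V) = v → f x = b)
    then B ^ mEdges (G.induce U) f else 0

def pickC {q : ℕ} (c c' : Fin q) : Fin 2 → Fin q := fun t => if t = 0 then c else c'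

lemma pickC_inj {q : ℕ} {c c' : Fin q} (hcc : c ≠ c') : Function.Injective (pickC c c') := by
  intro s t h
  fin_cases s <;> fin_cases t <;> simp [pickC] at h ⊢
  · exact hcc h
  · exact hcc h.symm

lemma mEdges_congr_inj {W : Type} [Fintype W] (H : SimpleGraph W) {q q' : ℕ}
    (g : W → Fin q) (g' : W → Fin q') (hgg : ∀ x y, g x = g y ↔ g' x = g' y) :
    mEdges H g = mEdges H g' := by
  unfold mEdges
  congr 1
  apply Finset.filter_congr
  intro e _
  constructor
  · rintro ⟨h1, h2⟩
    exact ⟨h1, fun x hx y hy => (hgg x y).mp (h2 x hx y hy)⟩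
  · rintro ⟨h1, h2⟩
    exact ⟨h1, fun x hx y hy => (hgg x y).mpr (h2 x hx y hy)⟩

lemma condZq_eq_condZ2 (G : SimpleGraph V) (B : ℝ) {q : ℕ} (U : Set V) (u v : V)
    {c c' : Fin q} (hcc : c ≠ c') (a2 b2 : Fin 2) :
    condZq G B U u v c c' (pickC c c' a2) (pickC c c' b2) = condZ2 G B U u v a2 b2 := by
  classical
  unfold condZq condZ2
  rw [← Finset.sum_filter_of_ne (p := fun ξ : ↥U → Fin q => ∀ x, ξ x = c ∨ ξ x = c')
    (fun ξ _ h => by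
      by_contra hval
      exact h (if_neg (fun hcond => hval hcond.1)))]
  have himg : Finset.univ.filter (fun ξ : ↥U → Fin q => ∀ x, ξ x = c ∨ ξ x = c')
      = Finset.image (fun f : ↥U → Fin 2 => pickC c c' ∘ f) Finset.univ := by
    ext ξ
    simp only [Finset.mem_filter, Finset.mem_univ, true_and, Finset.mem_image]
    constructor
    · intro hval
      refine ⟨fun x => if ξ x = c then 0 else 1, funext fun x => ?_⟩
      show pickC c c' (if ξ x = c then 0 else 1) = ξ x
      by_cases h : ξ x = c
      · rw [if_pos h, h]; rfl
      · rw [if_neg h, (hval x).resolve_left h]; rfl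
    · rintro ⟨f, rfl⟩ x
      by_cases h : f x = 0 <;> simp [pickC, Function.comp, h]
  have hinj : ∀ f1 ∈ (Finset.univ : Finset (↥U → Fin 2)), ∀ f2 ∈ Finset.univ,
      (fun f : ↥U → Fin 2 => pickC c c' ∘ f) f1 = (fun f : ↥U → Fin 2 => pickC c c' ∘ f) f2 →
        f1 = f2 :=
    fun f1 _ f2 _ h => funext fun x => pickC_inj hcc (congrFun h x)
  rw [himg, Finset.sum_image hinj]
  refine Finset.sum_congr rfl fun f _ => ?_
  have hm : mEdges (G.induce U) (pickC c c' ∘ f) = mEdges (G.induce U) f :=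
    mEdges_congr_inj _ _ _ (fun x y => ⟨fun h => pickC_inj hcc h,
      fun h => congrArg (pickC c c') h⟩)
  by_cases hcond2 : (∀ x : ↥U, (x : V) = u → f x = a2) ∧ (∀ x : ↥U, (x : V) = v → f x = b2)
  · rw [if_pos, if_pos hcond2, hm]
    exact ⟨fun x => by by_cases h : f x = 0 <;> simp [pickC, Function.comp, h],
      fun x hx => congrArg _ (hcond2.1 x hx), fun x hx => congrArg _ (hcond2.2 x hx)⟩
  · rw [if_neg, if_neg hcond2]
    intro hc
    exact hcond2 ⟨fun x hx => pickC_inj hcc (hc.2.1 x hx),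
      fun x hx => pickC_inj hcc (hc.2.2 x hx)⟩

lemma condZ2_pos (G : SimpleGraph V) {B : ℝ} (hB : 0 < B) (U : Set V) {u v : V}
    (hu : u ∈ U) (hv : v ∈ U) (huv : u ≠ v) (a b : Fin 2) :
    0 < condZ2 G B U u v a b := by
  classical
  unfold condZ2
  refine Finset.sum_pos' (fun f _ => ?_) ⟨fun x => if (x : V) = u then a else b,
    Finset.mem_univ _, ?_⟩
  · split
    · exact pow_nonneg hB.le _
    · exact le_refl 0
  · rw [if_pos ⟨fun x hx => if_pos hx, fun x hx => if_neg (by rw [hx]; exact huv.symm)⟩]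
    exact pow_pos hB _

lemma mem_classOf {q : ℕ} {σ : V → Fin q} {c c' : Fin q} {x : V} :
    x ∈ classOf σ c c' ↔ σ x = c ∨ σ x = c' := Iff.rfl

lemma sum_compat (G : SimpleGraph V) (B : ℝ) {q : ℕ} (u v : V) (c c' a b : Fin q)
    (τ : V → Fin q) (hu : u ∈ classOf τ c c') (hv : v ∈ classOf τ c c') :
    (∑ σ : V → Fin q, if (∀ x, x ∉ classOf τ c c' → σ x = τ x) ∧
        (∀ x, x ∈ classOf τ c c' → σ x = c ∨ σ x = c') ∧ σ u = a ∧ σ v = b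
      then B ^ mEdges G σ else 0)
      = B ^ mOut G (classOf τ c c') τ * condZq G B (classOf τ c c') u v c c' a b := by
  classical
  set U := classOf τ c c' with hU
  have h1 : (∑ σ : V → Fin q, if (∀ x, x ∉ U → σ x = τ x) ∧
        (∀ x, x ∈ U → σ x = c ∨ σ x = c') ∧ σ u = a ∧ σ v = b
      then B ^ mEdges G σ else 0)
      = ∑ σ : V → Fin q, if (∀ x, x ∉ U → σ x = τ x) then
          (if (∀ x, x ∈ U → σ x = c ∨ σ x = c') ∧ σ u = a ∧ σ v = b
            then B ^ mEdges G σ else 0) else 0 :=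
    Finset.sum_congr rfl fun σ _ => by rw [ite_and]
  rw [h1, sum_ext τ U (fun σ => if (∀ x, x ∈ U → σ x = c ∨ σ x = c') ∧ σ u = a ∧ σ v = b
    then B ^ mEdges G σ else 0)]
  unfold condZq
  rw [Finset.mul_sum]
  refine Finset.sum_congr rfl fun ξ _ => ?_
  by_cases hQ : (∀ x, ξ x = c ∨ ξ x = c') ∧ (∀ x : ↥U, (x : V) = u → ξ x = a) ∧
      (∀ x : ↥U, (x : V) = v → ξ x = b)
  · rw [if_pos hQ, if_pos]
    · have hco : (fun x : ↥U => extFun τ U ξ x) = ξ := funext fun x => extFun_coe τ U ξ x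
      have hb : ∀ x, x ∈ U → ∀ y, y ∉ U → extFun τ U ξ x ≠ extFun τ U ξ y := by
        intro x hx y hy heq
        rw [extFun_mem τ U ξ hx, extFun_not_mem τ U ξ hy] at heq
        exact hy (hU ▸ mem_classOf.mpr (heq ▸ hQ.1 ⟨x, hx⟩))
      rw [mEdges_split G U _ hb, hco, mOut_congr G U (extFun τ U ξ) τ
        (fun x hx => extFun_not_mem τ U ξ hx), pow_add, mul_comm]
    · refine ⟨fun x hx => by rw [extFun_mem τ U ξ hx]; exact hQ.1 ⟨x, hx⟩, ?_, ?_⟩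
      · rw [extFun_mem τ U ξ hu]; exact hQ.2.1 ⟨u, hu⟩ rfl
      · rw [extFun_mem τ U ξ hv]; exact hQ.2.2 ⟨v, hv⟩ rfl
  · rw [if_neg hQ, if_neg, mul_zero]
    rintro ⟨hP1, hP2, hP3⟩
    refine hQ ⟨fun x => ?_, fun x hx => ?_, fun x hx => ?_⟩
    · rw [← extFun_coe τ U ξ x]; exact hP1 x x.2
    · have hxu : x = ⟨u, hu⟩ := Subtype.ext hx
      rw [hxu, ← extFun_mem τ U ξ hu]
      exact hP2
    · have hxv : x = ⟨v, hv⟩ := Subtype.ext hx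
      rw [hxv, ← extFun_mem τ U ξ hv]
      exact hP3

lemma classOf_eq {q : ℕ} {σ η : V → Fin q} {c c' : Fin q}
    (hout : ∀ x, x ∉ classOf σ c c' → η x = σ x)
    (hin : ∀ x, x ∈ classOf σ c c' → η x = c ∨ η x = c') :
    classOf η c c' = classOf σ c c' := by
  ext x
  constructor
  · intro hx
    by_contra hns
    rw [mem_classOf] at hx
    rw [hout x hns] at hx
    exact hns hx
  · exact fun hx => hin x hx

lemma isingCondP_eq (G : SimpleGraph V) (B : ℝ) {q : ℕ} (U : Set V) (u v : V)
    (c c' : Fin q) (ξ : ↥U → Fin q) :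
    isingCondP G B U u v c c' ξ
      = B ^ mEdges (G.induce U) ξ / condZq G B U u v c c' c c' := by
  unfold isingCondP condZq
  rw [Finset.sum_filter]

lemma resampleDist_eq_of_eq (G : SimpleGraph V) {q : ℕ} (B : ℝ)
    {u v : V} (η : V → Fin q) (heq : η u = η v) :
    resampleDist G q B u v η
      = pottsP G q B η * ((q : ℝ) * B / (B + (q : ℝ) - 1)) := by
  classical
  unfold resampleDist resampleKernel
  have hterm : ∀ σ : V → Fin q, (pottsP G q B σ *
      if σ u ≠ σ v then (if η = σ then 1 else 0)
      else ((q : ℝ) * B / (B + (q : ℝ) - 1)) * (if η = σ then 1 else 0) +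
        ∑ c' ∈ Finset.univ.erase (σ u),
          ((1 - B) / (B + (q : ℝ) - 1)) *
            (if (∀ x, x ∉ classOf σ (σ u) c' → η x = σ x) ∧
                (∀ x ∈ classOf σ (σ u) c', η x = σ u ∨ η x = c') ∧
                η u = σ u ∧ η v = c'
              then isingCondP G B (classOf σ (σ u) c') u v (σ u) c'
                  (fun x => η (x : V))
              else 0))
      = if η = σ then pottsP G q B η * ((q : ℝ) * B / (B + (q : ℝ) - 1)) else 0 := by
    intro σ
    by_cases hσ : σ u = σ v
    · rw [if_neg (by simpa using hσ)]
      have hzero : (∑ c' ∈ Finset.univ.erase (σ u),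
          ((1 - B) / (B + (q : ℝ) - 1)) *
            (if (∀ x, x ∉ classOf σ (σ u) c' → η x = σ x) ∧
                (∀ x ∈ classOf σ (σ u) c', η x = σ u ∨ η x = c') ∧
                η u = σ u ∧ η v = c'
              then isingCondP G B (classOf σ (σ u) c') u v (σ u) c'
                  (fun x => η (x : V))
              else 0)) = 0 := by
        refine Finset.sum_eq_zero fun c'' hc'' => ?_
        rw [if_neg, mul_zero]
        rintro ⟨-, -, h3, h4⟩
        exact (Finset.mem_erase.mp hc'').1 (by rw [← h4, ← heq, h3])
      rw [hzero, add_zero]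
      by_cases hησ : η = σ
      · rw [if_pos hησ, if_pos hησ, hησ]
        ring
      · rw [if_neg hησ, if_neg hησ, mul_zero, mul_zero]
    · rw [if_pos (by simpa using hσ)]
      have hησ : ¬ η = σ := fun h => hσ (by rw [← h]; exact heq)
      rw [if_neg hησ, if_neg hησ, mul_zero]
  rw [Finset.sum_congr rfl fun σ _ => hterm σ]
  rw [Finset.sum_ite_eq Finset.univ η
    (fun _ => pottsP G q B η * ((q : ℝ) * B / (B + (q : ℝ) - 1)))]
  rw [if_pos (Finset.mem_univ _)]

lemma resampleDist_eq_of_ne (G : SimpleGraph V) {q : ℕ} (B : ℝ)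
    {u v : V} (η : V → Fin q) (hne : η u ≠ η v) :
    resampleDist G q B u v η
      = pottsP G q B η * (1 + (1 - B) / (B + (q : ℝ) - 1) *
          (condZ2 G B (classOf η (η u) (η v)) u v 0 0 /
            condZ2 G B (classOf η (η u) (η v)) u v 0 1)) := by
  classical
  set c := η u with hc
  set c' := η v with hc'
  set U := classOf η c c' with hUdef
  have hu : u ∈ U := Or.inl rfl
  have hv : v ∈ U := Or.inr rfl
  set icp0 : ℝ := isingCondP G B U u v c c' (fun x : ↥U => η (x : V)) with hicp0
  set coeff : ℝ := (1 - B) / (B + (q : ℝ) - 1) with hcoeff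
  have hterm : ∀ σ : V → Fin q, pottsP G q B σ * resampleKernel G q B u v σ η
      = (if σ u ≠ σ v then pottsP G q B σ * (if η = σ then 1 else 0) else 0)
        + (if (∀ x, x ∉ U → σ x = η x) ∧ (∀ x, x ∈ U → σ x = c ∨ σ x = c')
              ∧ σ u = c ∧ σ v = c
            then pottsP G q B σ * (coeff * icp0) else 0) := by
    intro σ
    unfold resampleKernel
    by_cases hσ : σ u = σ v
    · rw [if_neg (not_not_intro hσ), if_neg (not_not_intro hσ), zero_add]
      have hησ : ¬ η = σ := fun h => hne (by rw [hc, hc', h, hσ])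
      rw [if_neg hησ, mul_zero, zero_add]
      have hsum : (∑ c'' ∈ Finset.univ.erase (σ u),
          coeff * (if (∀ x, x ∉ classOf σ (σ u) c'' → η x = σ x) ∧
              (∀ x ∈ classOf σ (σ u) c'', η x = σ u ∨ η x = c'') ∧
              η u = σ u ∧ η v = c''
            then isingCondP G B (classOf σ (σ u) c'') u v (σ u) c''
                (fun x => η (x : V))
            else 0))
          = coeff * (if (∀ x, x ∉ classOf σ (σ u) c' → η x = σ x) ∧
              (∀ x ∈ classOf σ (σ u) c', η x = σ u ∨ η x = c') ∧
              η u = σ u ∧ η v = c'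
            then isingCondP G B (classOf σ (σ u) c') u v (σ u) c'
                (fun x => η (x : V))
            else 0) := by
        refine Finset.sum_eq_single c' (fun b _ hb => ?_) (fun hnotmem => ?_)
        · rw [if_neg, mul_zero]
          rintro ⟨-, -, -, h4⟩
          exact hb (by rw [← h4])
        · rw [if_neg, mul_zero]
          rintro ⟨-, -, h3, h4⟩
          have : c' = σ u := by
            by_contra hcs
            exact hnotmem (Finset.mem_erase.mpr ⟨hcs, Finset.mem_univ _⟩)
          exact hne (by rw [hc, hc', h3, ← this, h4, this])
      rw [hsum]
      by_cases hD : (∀ x, x ∉ U → σ x = η x) ∧ (∀ x, x ∈ U → σ x = c ∨ σ x = c')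
          ∧ σ u = c ∧ σ v = c
      · rw [if_pos hD]
        have hσu : σ u = c := hD.2.2.1
        have hclass : classOf σ c c' = U := by
          rw [hUdef]
          exact classOf_eq (fun x hx => hD.1 x hx) (fun x hx => hD.2.1 x hx)
        have hcond : (∀ x, x ∉ classOf σ (σ u) c' → η x = σ x) ∧
            (∀ x ∈ classOf σ (σ u) c', η x = σ u ∨ η x = c') ∧
            η u = σ u ∧ η v = c' := by
          rw [hσu, hclass]
          exact ⟨fun x hx => (hD.1 x hx).symm, fun x hx => hx, rfl, rfl⟩
        rw [if_pos hcond]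
        have hicpeq : isingCondP G B (classOf σ (σ u) c') u v (σ u) c'
            (fun x : ↥(classOf σ (σ u) c') => η (x : V)) = icp0 := by
          rw [hicp0, hσu, hclass]
        rw [hicpeq]
      · rw [if_neg hD, if_neg, mul_zero, mul_zero]
        rintro ⟨h1, h2, h3, h4⟩
        have hσu : σ u = c := by rw [hc, h3]
        rw [hσu] at h1 h2
        have hclass : U = classOf σ c c' := by
          rw [hUdef]
          exact classOf_eq (fun x hx => h1 x hx) (fun x hx => h2 x hx)
        refine hD ⟨fun x hx => ?_, fun x hx => ?_, hσu, by rw [← hσ, hσu]⟩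
        · rw [hclass] at hx
          exact (h1 x hx).symm
        · rw [hclass] at hx
          exact hx
    · have hD0 : ¬ ((∀ x, x ∉ U → σ x = η x) ∧ (∀ x, x ∈ U → σ x = c ∨ σ x = c')
          ∧ σ u = c ∧ σ v = c) := by
        rintro ⟨-, -, h3, h4⟩
        exact hσ (by rw [h3, h4])
      rw [if_pos (show σ u ≠ σ v from hσ), if_pos (show σ u ≠ σ v from hσ),
        if_neg hD0, add_zero]
  unfold resampleDist
  rw [Finset.sum_congr rfl fun σ _ => hterm σ, Finset.sum_add_distrib]
  have hfirst : (∑ σ : V → Fin q,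
      if σ u ≠ σ v then pottsP G q B σ * (if η = σ then 1 else 0) else 0)
      = pottsP G q B η := by
    rw [Finset.sum_eq_single η (fun σ _ hσ => ?_) (fun h => absurd (Finset.mem_univ _) h)]
    · rw [if_pos (by simpa using hne), if_pos rfl, mul_one]
    · by_cases h : σ u ≠ σ v
      · rw [if_pos h, if_neg (fun hh => hσ hh.symm), mul_zero]
      · rw [if_neg h]
  rw [hfirst]
  have hsecond : (∑ σ : V → Fin q,
      if (∀ x, x ∉ U → σ x = η x) ∧ (∀ x, x ∈ U → σ x = c ∨ σ x = c')
          ∧ σ u = c ∧ σ v = c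
        then pottsP G q B σ * (coeff * icp0) else 0)
      = (B ^ mOut G U η * condZq G B U u v c c' c c / pottsZ G q B) * (coeff * icp0) := by
    have : ∀ σ : V → Fin q, (if (∀ x, x ∉ U → σ x = η x) ∧ (∀ x, x ∈ U → σ x = c ∨ σ x = c')
          ∧ σ u = c ∧ σ v = c then pottsP G q B σ * (coeff * icp0) else 0)
        = (if (∀ x, x ∉ U → σ x = η x) ∧ (∀ x, x ∈ U → σ x = c ∨ σ x = c')
          ∧ σ u = c ∧ σ v = c then B ^ mEdges G σ else 0) / pottsZ G q B * (coeff * icp0) := by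
      intro σ
      split
      · rw [pottsP]
      · rw [zero_div, zero_mul]
    rw [Finset.sum_congr rfl fun σ _ => this σ, ← Finset.sum_mul, ← Finset.sum_div]
    rw [hUdef, sum_compat G B u v c c' c c η hu hv]
  rw [hsecond]
  have hsplitη : mEdges G η = mEdges (G.induce U) (fun x : ↥U => η (x : V)) + mOut G U η := by
    refine mEdges_split G U η ?_
    intro x hx y hy hxy
    exact hy (hUdef ▸ mem_classOf.mpr (hxy ▸ hx))
  have hicp : icp0 = B ^ mEdges (G.induce U) (fun x : ↥U => η (x : V)) /
      condZ2 G B U u v 0 1 := by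
    rw [hicp0, isingCondP_eq]
    congr 1
    have := condZq_eq_condZ2 G B U u v (show c ≠ c' from hne) 0 1
    simpa [pickC] using this
  have hz00 : condZq G B U u v c c' c c = condZ2 G B U u v 0 0 := by
    have := condZq_eq_condZ2 G B U u v (show c ≠ c' from hne) 0 0
    simpa [pickC] using this
  rw [hicp, hz00, pottsP, hsplitη, pow_add]
  ring

lemma pottsZ_pos (G : SimpleGraph V) {q : ℕ} {B : ℝ} (hB0 : 0 < B) (hq : 3 ≤ q) :
    0 < pottsZ G q B :=
  Finset.sum_pos (fun σ _ => pow_pos hB0 _)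
    ⟨fun _ => ⟨0, by omega⟩, Finset.mem_univ _⟩

lemma sum_pottsP (G : SimpleGraph V) {q : ℕ} {B : ℝ} (hB0 : 0 < B) (hq : 3 ≤ q) :
    ∑ σ : V → Fin q, pottsP G q B σ = 1 := by
  unfold pottsP
  rw [← Finset.sum_div]
  rw [show (∑ σ : V → Fin q, B ^ mEdges G σ) = pottsZ G q B from rfl,
    div_self (pottsZ_pos G hB0 hq).ne']

lemma sum_cond_icp (G : SimpleGraph V) {q : ℕ} {B : ℝ} (hB0 : 0 < B)
    {u v : V} (huv : u ≠ v) (σ : V → Fin q) {c'' : Fin q} (hσuv : σ u = σ v)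
    (hcc : σ u ≠ c'') :
    (∑ η : V → Fin q, if (∀ x, x ∉ classOf σ (σ u) c'' → η x = σ x) ∧
        (∀ x ∈ classOf σ (σ u) c'', η x = σ u ∨ η x = c'') ∧ η u = σ u ∧ η v = c''
      then isingCondP G B (classOf σ (σ u) c'') u v (σ u) c'' (fun x => η (x : V))
      else 0) = 1 := by
  classical
  set U'' := classOf σ (σ u) c'' with hU
  have hu : u ∈ U'' := Or.inl rfl
  have hv : v ∈ U'' := Or.inl hσuv.symm
  have hN : condZq G B U'' u v (σ u) c'' (σ u) c'' = condZ2 G B U'' u v 0 1 := by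
    have := condZq_eq_condZ2 G B U'' u v hcc 0 1
    simpa [pickC] using this
  have hNpos : 0 < condZ2 G B U'' u v 0 1 := condZ2_pos G hB0 U'' hu hv huv 0 1
  rw [Finset.sum_congr rfl fun η _ => by rw [ite_and]]
  rw [sum_ext σ U'' (fun η => if (∀ x ∈ U'', η x = σ u ∨ η x = c'') ∧ η u = σ u ∧ η v = c''
    then isingCondP G B U'' u v (σ u) c'' (fun x => η (x : V)) else 0)]
  have hper : ∀ ξ : ↥U'' → Fin q,
      (if (∀ x ∈ U'', extFun σ U'' ξ x = σ u ∨ extFun σ U'' ξ x = c'') ∧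
          extFun σ U'' ξ u = σ u ∧ extFun σ U'' ξ v = c''
        then isingCondP G B U'' u v (σ u) c'' (fun x : ↥U'' => extFun σ U'' ξ (x : V))
        else 0)
      = (if (∀ x, ξ x = σ u ∨ ξ x = c'') ∧ (∀ x : ↥U'', (x : V) = u → ξ x = σ u) ∧
          (∀ x : ↥U'', (x : V) = v → ξ x = c'')
        then B ^ mEdges (G.induce U'') ξ else 0) / condZ2 G B U'' u v 0 1 := by
    intro ξ
    have hco : (fun x : ↥U'' => extFun σ U'' ξ (x : V)) = ξ :=
      funext fun x => extFun_coe σ U'' ξ x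
    by_cases hQ : (∀ x, ξ x = σ u ∨ ξ x = c'') ∧ (∀ x : ↥U'', (x : V) = u → ξ x = σ u) ∧
        (∀ x : ↥U'', (x : V) = v → ξ x = c'')
    · rw [if_pos hQ, if_pos, isingCondP_eq, hco, hN]
      refine ⟨fun x hx => by rw [extFun_mem σ U'' ξ hx]; exact hQ.1 ⟨x, hx⟩, ?_, ?_⟩
      · rw [extFun_mem σ U'' ξ hu]; exact hQ.2.1 ⟨u, hu⟩ rfl
      · rw [extFun_mem σ U'' ξ hv]; exact hQ.2.2 ⟨v, hv⟩ rfl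
    · rw [if_neg hQ, if_neg, zero_div]
      rintro ⟨hP1, hP2, hP3⟩
      refine hQ ⟨fun x => ?_, fun x hx => ?_, fun x hx => ?_⟩
      · rw [← extFun_coe σ U'' ξ x]; exact hP1 x x.2
      · have hxu : x = ⟨u, hu⟩ := Subtype.ext hx
        rw [hxu, ← extFun_mem σ U'' ξ hu]; exact hP2
      · have hxv : x = ⟨v, hv⟩ := Subtype.ext hx
        rw [hxv, ← extFun_mem σ U'' ξ hv]; exact hP3
  rw [Finset.sum_congr rfl fun ξ _ => hper ξ, ← Finset.sum_div]
  have : (∑ ξ : ↥U'' → Fin q, if (∀ x, ξ x = σ u ∨ ξ x = c'') ∧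
      (∀ x : ↥U'', (x : V) = u → ξ x = σ u) ∧ (∀ x : ↥U'', (x : V) = v → ξ x = c'')
      then B ^ mEdges (G.induce U'') ξ else 0)
      = condZq G B U'' u v (σ u) c'' (σ u) c'' := rfl
  rw [this, hN, div_self hNpos.ne']

lemma sum_resampleKernel (G : SimpleGraph V) {q : ℕ} {B : ℝ} (hB0 : 0 < B)
    (hq : 3 ≤ q) {u v : V} (huv : u ≠ v) (σ : V → Fin q) :
    ∑ η : V → Fin q, resampleKernel G q B u v σ η = 1 := by
  classical
  have hq3 : (3 : ℝ) ≤ (q : ℝ) := by exact_mod_cast hq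
  have hD : B + (q : ℝ) - 1 ≠ 0 := by nlinarith
  unfold resampleKernel
  by_cases hσ : σ u = σ v
  · rw [Finset.sum_congr rfl fun η _ => if_neg (not_not_intro hσ)]
    rw [Finset.sum_add_distrib]
    have h1 : (∑ η : V → Fin q, ((q : ℝ) * B / (B + (q : ℝ) - 1)) * (if η = σ then 1 else 0))
        = (q : ℝ) * B / (B + (q : ℝ) - 1) := by
      rw [← Finset.mul_sum, Finset.sum_ite_eq' Finset.univ σ (fun _ => (1 : ℝ)),
        if_pos (Finset.mem_univ _), mul_one]
    have h2 : (∑ η : V → Fin q, ∑ c'' ∈ Finset.univ.erase (σ u),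
        ((1 - B) / (B + (q : ℝ) - 1)) *
          (if (∀ x, x ∉ classOf σ (σ u) c'' → η x = σ x) ∧
              (∀ x ∈ classOf σ (σ u) c'', η x = σ u ∨ η x = c'') ∧
              η u = σ u ∧ η v = c''
            then isingCondP G B (classOf σ (σ u) c'') u v (σ u) c'' (fun x => η (x : V))
            else 0))
        = ((q : ℝ) - 1) * ((1 - B) / (B + (q : ℝ) - 1)) := by
      rw [Finset.sum_comm]
      have hper : ∀ c'' ∈ Finset.univ.erase (σ u), (∑ η : V → Fin q,
          ((1 - B) / (B + (q : ℝ) - 1)) *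
            (if (∀ x, x ∉ classOf σ (σ u) c'' → η x = σ x) ∧
              (∀ x ∈ classOf σ (σ u) c'', η x = σ u ∨ η x = c'') ∧
              η u = σ u ∧ η v = c''
            then isingCondP G B (classOf σ (σ u) c'') u v (σ u) c'' (fun x => η (x : V))
            else 0)) = (1 - B) / (B + (q : ℝ) - 1) := by
        intro c'' hc''
        rw [← Finset.mul_sum,
          sum_cond_icp G hB0 huv σ hσ (fun h => (Finset.mem_erase.mp hc'').1 h.symm), mul_one]
      rw [Finset.sum_congr rfl hper, Finset.sum_const, Finset.card_erase_of_mem (Finset.mem_univ _),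
        Finset.card_univ, Fintype.card_fin, nsmul_eq_mul]
      congr 1
      have hq1 : 1 ≤ q := by omega
      rw [Nat.cast_sub hq1, Nat.cast_one]
    rw [h1, h2]
    field_simp
    ring
  · rw [Finset.sum_congr rfl fun η _ => if_pos (show σ u ≠ σ v from hσ)]
    rw [Finset.sum_ite_eq' Finset.univ σ (fun _ => (1 : ℝ)), if_pos (Finset.mem_univ _)]

lemma sum_resampleDist (G : SimpleGraph V) {q : ℕ} {B : ℝ} (hB0 : 0 < B)
    (hq : 3 ≤ q) {u v : V} (huv : u ≠ v) :
    ∑ η : V → Fin q, resampleDist G q B u v η = 1 := by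
  unfold resampleDist
  rw [Finset.sum_comm]
  have : ∀ σ : V → Fin q, (∑ η : V → Fin q, pottsP G q B σ * resampleKernel G q B u v σ η)
      = pottsP G q B σ := by
    intro σ
    rw [← Finset.mul_sum, sum_resampleKernel G hB0 hq huv σ, mul_one]
  rw [Finset.sum_congr rfl fun σ _ => this σ, sum_pottsP G hB0 hq]

lemma mEdges_sup (G : SimpleGraph V) {q : ℕ} {u v : V} (huv : u ≠ v) (hadj : ¬ G.Adj u v)
    (η : V → Fin q) :
    mEdges (G ⊔ SimpleGraph.fromEdgeSet {s(u, v)}) η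
      = mEdges G η + (if η u = η v then 1 else 0) := by
  classical
  have hL : mEdges (G ⊔ SimpleGraph.fromEdgeSet {s(u, v)}) η
      = (Finset.univ.filter fun e : Sym2 V =>
          e ∈ (G ⊔ SimpleGraph.fromEdgeSet {s(u, v)}).edgeSet ∧
            ∀ x ∈ e, ∀ y ∈ e, η x = η y).card := by
    unfold mEdges; congr!
  have hR : mEdges G η = (Finset.univ.filter fun e : Sym2 V =>
      e ∈ G.edgeSet ∧ ∀ x ∈ e, ∀ y ∈ e, η x = η y).card := by
    unfold mEdges; congr!
  rw [hL, hR]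
  have hedge : (G ⊔ SimpleGraph.fromEdgeSet {s(u, v)}).edgeSet = G.edgeSet ∪ {s(u, v)} := by
    rw [SimpleGraph.edgeSet_sup, SimpleGraph.edgeSet_fromEdgeSet]
    ext e
    simp only [Set.mem_union, Set.mem_diff, Set.mem_singleton_iff, Set.mem_setOf_eq]
    constructor
    · rintro (h | ⟨h, -⟩)
      · exact Or.inl h
      · exact Or.inr h
    · rintro (h | h)
      · exact Or.inl h
      · exact Or.inr ⟨h, by rw [h]; exact fun hd => huv (Sym2.mk_isDiag_iff.mp hd)⟩
  by_cases hm : η u = η v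
  · rw [if_pos hm]
    have hset : (Finset.univ.filter fun e : Sym2 V =>
        e ∈ (G ⊔ SimpleGraph.fromEdgeSet {s(u, v)}).edgeSet ∧ ∀ x ∈ e, ∀ y ∈ e, η x = η y)
        = insert s(u, v) (Finset.univ.filter fun e : Sym2 V =>
            e ∈ G.edgeSet ∧ ∀ x ∈ e, ∀ y ∈ e, η x = η y) := by
      ext e
      simp only [Finset.mem_filter, Finset.mem_univ, true_and, Finset.mem_insert, hedge,
        Set.mem_union, Set.mem_singleton_iff]
      constructor
      · rintro ⟨h | h, hmono⟩
        · exact Or.inr ⟨h, hmono⟩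
        · exact Or.inl h
      · rintro (rfl | ⟨h, hmono⟩)
        · refine ⟨Or.inr rfl, ?_⟩
          intro x hx y hy
          rw [Sym2.mem_iff] at hx hy
          rcases hx with rfl | rfl <;> rcases hy with rfl | rfl
          · rfl
          · exact hm
          · exact hm.symm
          · rfl
        · exact ⟨Or.inl h, hmono⟩
    have hnm : s(u, v) ∉ Finset.univ.filter fun e : Sym2 V =>
        e ∈ G.edgeSet ∧ ∀ x ∈ e, ∀ y ∈ e, η x = η y := by
      intro hmem
      exact hadj (G.mem_edgeSet.mp (Finset.mem_filter.mp hmem).2.1)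
    rw [hset, Finset.card_insert_of_notMem hnm]
  · rw [if_neg hm, add_zero]
    congr 1
    ext e
    simp only [Finset.mem_filter, Finset.mem_univ, true_and, hedge, Set.mem_union,
      Set.mem_singleton_iff]
    constructor
    · rintro ⟨h | rfl, hmono⟩
      · exact ⟨h, hmono⟩
      · exact absurd (hmono u (Sym2.mem_mk_left u v) v (Sym2.mem_mk_right u v)) hm
    · rintro ⟨h, hmono⟩
      exact ⟨Or.inl h, hmono⟩

lemma pottsZ_sup (G : SimpleGraph V) {q : ℕ} {B : ℝ} (hB0 : 0 < B) (hq : 3 ≤ q)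
    {u v : V} (huv : u ≠ v) (hadj : ¬ G.Adj u v) :
    pottsZ (G ⊔ SimpleGraph.fromEdgeSet {s(u, v)}) q B
      = pottsZ G q B * ∑ η : V → Fin q, pottsP G q B η * (if η u = η v then B else 1) := by
  have hZ : pottsZ G q B ≠ 0 := (pottsZ_pos G hB0 hq).ne'
  rw [show pottsZ (G ⊔ SimpleGraph.fromEdgeSet {s(u, v)}) q B
      = ∑ η : V → Fin q, B ^ mEdges (G ⊔ SimpleGraph.fromEdgeSet {s(u, v)}) η from rfl]
  rw [Finset.mul_sum]
  refine Finset.sum_congr rfl fun η _ => ?_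
  rw [mEdges_sup G huv hadj η, pow_add, pottsP]
  by_cases h : η u = η v
  · rw [if_pos h, if_pos h, pow_one]
    field_simp
  · rw [if_neg h, if_neg h, pow_zero, mul_one, mul_one]
    field_simp

lemma pottsP_sup (G : SimpleGraph V) {q : ℕ} {B : ℝ} (hB0 : 0 < B) (hq : 3 ≤ q)
    {u v : V} (huv : u ≠ v) (hadj : ¬ G.Adj u v) (η : V → Fin q) :
    pottsP (G ⊔ SimpleGraph.fromEdgeSet {s(u, v)}) q B η
      = pottsP G q B η * (if η u = η v then B else 1) /
          ∑ η' : V → Fin q, pottsP G q B η' * (if η' u = η' v then B else 1) := by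
  rw [pottsP, pottsZ_sup G hB0 hq huv hadj, mEdges_sup G huv hadj η, pow_add, pottsP]
  by_cases h : η u = η v
  · rw [if_pos h, if_pos h, pow_one]
    rw [div_eq_mul_inv, div_eq_mul_inv, div_eq_mul_inv, mul_inv]
    ring
  · rw [if_neg h, if_neg h, pow_zero, mul_one, mul_one]
    rw [div_eq_mul_inv, div_eq_mul_inv, div_eq_mul_inv, mul_inv]
    ring

lemma sum_corr_le (G : SimpleGraph V) {q : ℕ} {B : ℝ} (hB0 : 0 < B) (hq : 3 ≤ q)
    (u v : V) :
    (∑ η : V → Fin q, if η u ≠ η v then pottsP G q B η *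
        |condZ2 G B (classOf η (η u) (η v)) u v 0 0 /
          condZ2 G B (classOf η (η u) (η v)) u v 0 1 - 1| else 0)
      ≤ expCorr G q B u v := by
  unfold expCorr
  refine Finset.sum_le_sum fun η _ => ?_
  have hPnn : 0 ≤ pottsP G q B η :=
    div_nonneg (pow_nonneg hB0.le _) (pottsZ_pos G hB0 hq).le
  by_cases h : η u = η v
  · rw [if_neg (not_not_intro h), if_pos h]
    refine mul_nonneg hPnn (mul_nonneg (inv_nonneg.mpr ?_)
      (Finset.sum_nonneg fun _ _ => abs_nonneg _))
    have : (3 : ℝ) ≤ (q : ℝ) := by exact_mod_cast hq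
    linarith
  · rw [if_pos h, if_neg h]
    exact le_of_eq rfl

noncomputable def Rfun (G : SimpleGraph V) (B : ℝ) (q : ℕ) (u v : V)
    (η : V → Fin q) : ℝ :=
  condZ2 G B (classOf η (η u) (η v)) u v 0 0 / condZ2 G B (classOf η (η u) (η v)) u v 0 1

theorem stmt19 {V : Type} [Fintype V] (B : ℝ) (hB : B ∈ Set.Ioo (0 : ℝ) 1)
    (q : ℕ) (hq : 3 ≤ q) (ε : ℝ) (hε : ε ∈ Set.Ioo (0 : ℝ) 1)
    (G : SimpleGraph V) (u v : V) (huv : u ≠ v) (hadj : ¬ G.Adj u v)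
    (hcorr : expCorr G q B u v ≤ ε) :
    (1 / 2) * ∑ η : V → Fin q,
        |resampleDist G q B u v η -
          pottsP (G ⊔ SimpleGraph.fromEdgeSet {s(u, v)}) q B η| ≤
      2 * ε / B := by
  classical
  obtain ⟨hB0, hB1⟩ := hB
  obtain ⟨hε0, hε1⟩ := hε
  have hq3 : (3 : ℝ) ≤ (q : ℝ) := by exact_mod_cast hq
  have hDpos : 0 < B + (q : ℝ) - 1 := by linarith
  have hco0 : 0 ≤ (1 - B) / (B + (q : ℝ) - 1) := div_nonneg (by linarith) hDpos.le
  have hco1 : (1 - B) / (B + (q : ℝ) - 1) ≤ 1 := by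
    rw [div_le_one hDpos]; linarith
  have hPnn : ∀ η : V → Fin q, 0 ≤ pottsP G q B η := fun η =>
    div_nonneg (pow_nonneg hB0.le _) (pottsZ_pos G hB0 hq).le
  have hnu : ∀ η : V → Fin q, resampleDist G q B u v η
      = pottsP G q B η * (if η u = η v then B else 1) * ((q : ℝ) / (B + (q : ℝ) - 1))
        + (if η u ≠ η v then
            (1 - B) / (B + (q : ℝ) - 1) * (pottsP G q B η * (Rfun G B q u v η - 1))
          else 0) := by
    intro η
    by_cases h : η u = η v
    · rw [resampleDist_eq_of_eq G B η h, if_pos h, if_neg (not_not_intro h), add_zero]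
      ring
    · rw [resampleDist_eq_of_ne G B η h, if_neg h, if_pos h]
      simp only [Rfun]
      have h1 : (1 : ℝ) + (1 - B) / (B + (q : ℝ) - 1)
          = (q : ℝ) / (B + (q : ℝ) - 1) := by
        field_simp
        ring
      rw [mul_one]
      calc pottsP G q B η * (1 + (1 - B) / (B + (q : ℝ) - 1) *
            (condZ2 G B (classOf η (η u) (η v)) u v 0 0 /
              condZ2 G B (classOf η (η u) (η v)) u v 0 1))
          = pottsP G q B η * ((1 + (1 - B) / (B + (q : ℝ) - 1))
              + (1 - B) / (B + (q : ℝ) - 1) *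
                (condZ2 G B (classOf η (η u) (η v)) u v 0 0 /
                  condZ2 G B (classOf η (η u) (η v)) u v 0 1 - 1)) := by ring
        _ = _ := by rw [h1]; ring
  have hT : (∑ η : V → Fin q,
      if η u ≠ η v then pottsP G q B η * |Rfun G B q u v η - 1| else 0) ≤ ε := by
    refine le_trans (le_of_eq ?_) (le_trans (sum_corr_le G hB0 hq u v) hcorr)
    refine Finset.sum_congr rfl fun η _ => ?_
    simp only [Rfun]
  set err := ∑ η : V → Fin q,
      (if η u ≠ η v then pottsP G q B η * (Rfun G B q u v η - 1) else 0) with herrdef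
  have herr : |err| ≤ ε := by
    refine le_trans (Finset.abs_sum_le_sum_abs _ _) (le_trans (le_of_eq ?_) hT)
    refine Finset.sum_congr rfl fun η _ => ?_
    by_cases h : η u ≠ η v
    · rw [if_pos h, if_pos h, abs_mul, abs_of_nonneg (hPnn η)]
    · rw [if_neg h, if_neg h, abs_zero]
  set SS := ∑ η : V → Fin q, pottsP G q B η * (if η u = η v then B else 1) with hSSdef
  have hSSB : B ≤ SS := by
    calc B = ∑ η : V → Fin q, pottsP G q B η * B := by
          rw [← Finset.sum_mul, sum_pottsP G hB0 hq, one_mul]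
      _ ≤ SS := by
          rw [hSSdef]
          refine Finset.sum_le_sum fun η _ => ?_
          refine mul_le_mul_of_nonneg_left ?_ (hPnn η)
          split <;> linarith
  have hSSpos : 0 < SS := lt_of_lt_of_le hB0 hSSB
  have hsum1 : SS * ((q : ℝ) / (B + (q : ℝ) - 1))
      + (1 - B) / (B + (q : ℝ) - 1) * err = 1 := by
    have h1 := sum_resampleDist G hB0 hq huv (q := q)
    rw [Finset.sum_congr rfl fun η _ => hnu η, Finset.sum_add_distrib,
      ← Finset.sum_mul] at h1
    have h2 : (∑ η : V → Fin q, if η u ≠ η v then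
          (1 - B) / (B + (q : ℝ) - 1) * (pottsP G q B η * (Rfun G B q u v η - 1)) else 0)
        = (1 - B) / (B + (q : ℝ) - 1) * err := by
      rw [herrdef, Finset.mul_sum]
      refine Finset.sum_congr rfl fun η _ => ?_
      by_cases h : η u ≠ η v
      · rw [if_pos h, if_pos h]
      · rw [if_neg h, if_neg h, mul_zero]
    rw [h2, ← hSSdef] at h1
    exact h1
  have hqd' : ((q : ℝ) / (B + (q : ℝ) - 1)) * SS
      = 1 - (1 - B) / (B + (q : ℝ) - 1) * err := by linear_combination hsum1
  have h4 : (1 / SS) * SS = 1 := by field_simp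
  have hqd : (q : ℝ) / (B + (q : ℝ) - 1) - 1 / SS
      = -((1 - B) / (B + (q : ℝ) - 1) * err) / SS := by
    rw [eq_div_iff hSSpos.ne', sub_mul]
    linear_combination hqd' - h4
  have hmu' : ∀ η : V → Fin q, pottsP (G ⊔ SimpleGraph.fromEdgeSet {s(u, v)}) q B η
      = pottsP G q B η * (if η u = η v then B else 1) / SS := by
    intro η
    rw [pottsP_sup G hB0 hq huv hadj η, ← hSSdef]
  have hpt : ∀ η : V → Fin q,
      |resampleDist G q B u v η - pottsP (G ⊔ SimpleGraph.fromEdgeSet {s(u, v)}) q B η|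
      ≤ pottsP G q B η * (if η u = η v then B else 1) *
          ((1 - B) / (B + (q : ℝ) - 1) * |err| / SS)
        + (if η u ≠ η v then
            (1 - B) / (B + (q : ℝ) - 1) * (pottsP G q B η * |Rfun G B q u v η - 1|)
          else 0) := by
    intro η
    rw [hnu η, hmu' η]
    have hsplit : pottsP G q B η * (if η u = η v then B else 1) *
          ((q : ℝ) / (B + (q : ℝ) - 1))
        + (if η u ≠ η v then
            (1 - B) / (B + (q : ℝ) - 1) * (pottsP G q B η * (Rfun G B q u v η - 1)) else 0)
        - pottsP G q B η * (if η u = η v then B else 1) / SS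
        = pottsP G q B η * (if η u = η v then B else 1) *
            ((q : ℝ) / (B + (q : ℝ) - 1) - 1 / SS)
          + (if η u ≠ η v then
              (1 - B) / (B + (q : ℝ) - 1) * (pottsP G q B η * (Rfun G B q u v η - 1))
            else 0) := by
      ring
    rw [hsplit, hqd]
    refine (abs_add_le _ _).trans (add_le_add ?_ ?_)
    · rw [abs_mul]
      have hnn : 0 ≤ pottsP G q B η * (if η u = η v then B else 1) :=
        mul_nonneg (hPnn η) (by split <;> linarith)
      rw [abs_of_nonneg hnn]
      refine mul_le_mul_of_nonneg_left (le_of_eq ?_) hnn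
      rw [abs_div, abs_neg, abs_mul, abs_of_nonneg hco0, abs_of_nonneg hSSpos.le]
    · by_cases h : η u ≠ η v
      · rw [if_pos h, if_pos h, abs_mul, abs_mul, abs_of_nonneg hco0,
          abs_of_nonneg (hPnn η)]
      · rw [if_neg h, if_neg h, abs_zero]
  have hsumbound : (∑ η : V → Fin q, |resampleDist G q B u v η -
        pottsP (G ⊔ SimpleGraph.fromEdgeSet {s(u, v)}) q B η|)
      ≤ (1 - B) / (B + (q : ℝ) - 1) * |err| + (1 - B) / (B + (q : ℝ) - 1) * ε := by
    refine (Finset.sum_le_sum fun η _ => hpt η).trans ?_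
    rw [Finset.sum_add_distrib, ← Finset.sum_mul, ← hSSdef]
    have e1 : SS * ((1 - B) / (B + (q : ℝ) - 1) * |err| / SS)
        = (1 - B) / (B + (q : ℝ) - 1) * |err| := by
      field_simp
    rw [e1]
    refine add_le_add_right ?_ _
    have e2 : (∑ η : V → Fin q, if η u ≠ η v then
          (1 - B) / (B + (q : ℝ) - 1) * (pottsP G q B η * |Rfun G B q u v η - 1|) else 0)
        = (1 - B) / (B + (q : ℝ) - 1) * (∑ η : V → Fin q, if η u ≠ η v then
            pottsP G q B η * |Rfun G B q u v η - 1| else 0) := by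
      rw [Finset.mul_sum]
      refine Finset.sum_congr rfl fun η _ => ?_
      by_cases h : η u ≠ η v
      · rw [if_pos h, if_pos h]
      · rw [if_neg h, if_neg h, mul_zero]
    rw [e2]
    exact mul_le_mul_of_nonneg_left hT hco0
  calc (1 / 2 : ℝ) * ∑ η : V → Fin q, |resampleDist G q B u v η -
        pottsP (G ⊔ SimpleGraph.fromEdgeSet {s(u, v)}) q B η|
      ≤ (1 / 2) * ((1 - B) / (B + (q : ℝ) - 1) * |err|
          + (1 - B) / (B + (q : ℝ) - 1) * ε) := by
        refine mul_le_mul_of_nonneg_left hsumbound (by norm_num)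
    _ ≤ (1 / 2) * (ε + ε) := by
        have ha : (1 - B) / (B + (q : ℝ) - 1) * |err| ≤ ε := by
          calc (1 - B) / (B + (q : ℝ) - 1) * |err| ≤ 1 * |err| :=
                mul_le_mul_of_nonneg_right hco1 (abs_nonneg _)
            _ = |err| := one_mul _
            _ ≤ ε := herr
        have hb : (1 - B) / (B + (q : ℝ) - 1) * ε ≤ ε := by
          calc (1 - B) / (B + (q : ℝ) - 1) * ε ≤ 1 * ε :=
                mul_le_mul_of_nonneg_right hco1 hε0.le
            _ = ε := one_mul _
        linarith
    _ = ε := by ring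
    _ ≤ 2 * ε / B := by
        rw [le_div_iff₀ hB0]
        nlinarith
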